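/- arXiv:2311.09973 — 3 statements merged into one kernel-verified Lean document; each statement's English description precedes it below -/
import Mathlib

section
/- Let c > 0, α > 0 and let N be a positive integer, and set a_j = c/(α · log(N + j)) for j ≥ 2 (assume 0 < a_j < 1 for all j ≥ 2). Let X ⊆ ℝ be {a_j}-porous. Then for every K ≥ 1 and every K-quasi-symmetric increasing homeomorphism f : ℝ → ℝ, the image f(X) has Lebesgue measure zero. -/
open MeasureTheory Set

/-- A set `X ⊆ ℝ` is `{aₙ}`-porous: there is a sequence of coverings of `X` by closed
intervals (encoded by their endpoint pairs) with pairwise disjoint interiors such that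
every interval `E` of the `n`-th covering contains a 'hole', a subinterval disjoint from
`X` of length at least `aₙ · leb(E)`; every interval of the `(n+1)`-st covering is
contained in `E ∖ E'` for some interval `E` of the `n`-th covering with hole `E'`; and the
supremum of the lengths of the intervals of the `n`-th covering tends to `0`. -/
def IsPorous (a : ℕ → ℝ) (X : Set ℝ) : Prop :=
  ∃ (C : ℕ → Set (ℝ × ℝ)) (h : ℕ → ℝ × ℝ → ℝ × ℝ),
    (∀ n, ∀ p ∈ C n, p.1 ≤ p.2) ∧
    (∀ n, X ⊆ ⋃ p ∈ C n, Icc p.1 p.2) ∧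
    (∀ n, (C n).Pairwise fun p q => Disjoint (Ioo p.1 p.2) (Ioo q.1 q.2)) ∧
    (∀ n, ∀ p ∈ C n,
      Icc (h n p).1 (h n p).2 ⊆ Icc p.1 p.2 ∧
      Disjoint (Icc (h n p).1 (h n p).2) X ∧
      a n * (p.2 - p.1) ≤ (h n p).2 - (h n p).1) ∧
    (∀ n, ∀ q ∈ C (n + 1), ∃ p ∈ C n,
      Icc q.1 q.2 ⊆ Icc p.1 p.2 \ Icc (h n p).1 (h n p).2) ∧
    (∀ ε > (0 : ℝ), ∃ N : ℕ, ∀ n ≥ N, ∀ p ∈ C n, p.2 - p.1 ≤ ε)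

/-- An increasing homeomorphism `f : ℝ → ℝ` is a `K`-quasi-symmetry if
`1/K ≤ (f(x+t) − f(x)) / (f(x) − f(x−t)) ≤ K` for all `x` and all `t > 0`. -/
def IsQuasiSymmetry (K : ℝ) (f : ℝ → ℝ) : Prop :=
  ∀ x t : ℝ, 0 < t →
    1 / K ≤ (f (x + t) - f x) / (f x - f (x - t)) ∧
    (f (x + t) - f x) / (f x - f (x - t)) ≤ K

lemma qs_half {K : ℝ} {f : ℝ → ℝ} (hK : 1 ≤ K) (hmono : StrictMono f)
    (hqs : IsQuasiSymmetry K f) {y t : ℝ} (ht : 0 < t) :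
    (f (y + 2*t) - f y) / (1 + K) ≤ f (y + t) - f y ∧
    (f (y + 2*t) - f y) / (1 + K) ≤ f (y + 2*t) - f (y + t) := by
  have hK0 : (0:ℝ) < K := lt_of_lt_of_le one_pos hK
  have h1K : (0:ℝ) < 1 + K := by linarith
  have hden : 0 < f (y+t) - f y := sub_pos.mpr (hmono (by linarith))
  have hnum : 0 < f (y+2*t) - f (y+t) := sub_pos.mpr (hmono (by linarith))
  obtain ⟨hlo, hhi⟩ := hqs (y+t) t ht
  have e1 : y + t + t = y + 2*t := by ring
  have e2 : y + t - t = y := by ring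
  rw [e1, e2] at hlo hhi
  have H1 : f (y+2*t) - f (y+t) ≤ K * (f (y+t) - f y) := by
    rw [div_le_iff₀ hden] at hhi; linarith
  have H2 : f (y+t) - f y ≤ K * (f (y+2*t) - f (y+t)) := by
    rw [div_le_div_iff₀ hK0 hden] at hlo; linarith
  constructor
  · rw [div_le_iff₀ h1K]; nlinarith
  · rw [div_le_iff₀ h1K]; nlinarith

lemma qs_dyadic {K : ℝ} {f : ℝ → ℝ} (hK : 1 ≤ K) (hmono : StrictMono f)
    (hqs : IsQuasiSymmetry K f) {p q : ℝ} (hpq : p < q) :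
    ∀ m k : ℕ, k < 2^m →
      (f q - f p) / (1+K)^m ≤
        f (p + ((k:ℝ)+1) * ((q - p)/2^m)) - f (p + (k:ℝ) * ((q - p)/2^m)) := by
  have h1K : (0:ℝ) < 1 + K := by linarith
  intro m
  induction m with
  | zero =>
    intro k hk
    have hk0 : k = 0 := by omega
    subst hk0
    have e1 : p + ((0:ℕ):ℝ) * ((q-p)/2^0) = p := by norm_num
    have e2 : p + (((0:ℕ):ℝ)+1) * ((q-p)/2^0) = q := by norm_num
    rw [e1, e2, pow_zero, div_one]
  | succ m ih =>
    intro k hk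
    set s : ℝ := (q - p)/2^(m+1) with hs
    have hs0 : 0 < s := by
      apply div_pos (by linarith) (by positivity)
    have hk2 : k / 2 < 2^m := by omega
    have parent := ih (k/2) hk2
    have e : (q-p)/2^m = 2*s := by
      rw [hs, pow_succ]; field_simp
    set y : ℝ := p + 2*((k/2 : ℕ):ℝ)*s with hy
    have parent' : (f q - f p) / (1+K)^m ≤ f (y + 2*s) - f y := by
      have e1 : p + (((k/2:ℕ):ℝ)+1) * ((q-p)/2^m) = y + 2*s := by rw [e, hy]; ring
      have e2 : p + ((k/2:ℕ):ℝ) * ((q-p)/2^m) = y := by rw [e, hy]; ring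
      rw [e1, e2] at parent
      exact parent
    obtain ⟨hleft, hright⟩ := qs_half hK hmono hqs (y := y) hs0
    have key : (f q - f p) / (1+K)^(m+1) ≤ (f (y + 2*s) - f y) / (1+K) := by
      rw [pow_succ, ← div_div]
      exact (div_le_div_iff_of_pos_right h1K).mpr parent'
    have hr : k % 2 = 0 ∨ k % 2 = 1 := by omega
    have hkr : (k:ℝ) = 2*((k/2:ℕ):ℝ) + ((k % 2 : ℕ):ℝ) := by
      push_cast [Nat.div_add_mod]
      rw [mul_comm]
      norm_cast
      omega
    rcases hr with hr | hr
    · have e1 : p + ((k:ℝ)+1) * s = y + s := by rw [hy, hkr, hr]; push_cast; ring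
      have e2 : p + (k:ℝ) * s = y := by rw [hy, hkr, hr]; push_cast; ring
      rw [e1, e2]
      calc (f q - f p)/(1+K)^(m+1) ≤ (f (y + 2*s) - f y)/(1+K) := key
        _ ≤ f (y + s) - f y := hleft
    · have e1 : p + ((k:ℝ)+1) * s = y + 2*s := by rw [hy, hkr, hr]; push_cast; ring
      have e2 : p + (k:ℝ) * s = y + s := by rw [hy, hkr, hr]; push_cast; ring
      rw [e1, e2]
      calc (f q - f p)/(1+K)^(m+1) ≤ (f (y + 2*s) - f y)/(1+K) := key
        _ ≤ f (y + 2*s) - f (y + s) := hright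

lemma qs_hole {K : ℝ} {f : ℝ → ℝ} (hK : 1 ≤ K) (hmono : StrictMono f)
    (hqs : IsQuasiSymmetry K f) {a p u v q : ℝ} (ha0 : 0 < a) (ha1 : a ≤ 1)
    (hpu : p ≤ u) (hvq : v ≤ q) (hpq : p < q) (hau : a * (q - p) ≤ v - u) :
    (a/4) ^ Real.logb 2 (1+K) * (f q - f p) ≤ f v - f u := by
  have hK0 : (0:ℝ) < K := lt_of_lt_of_le one_pos hK
  have h1K : (0:ℝ) < 1 + K := by linarith
  set β : ℝ := Real.logb 2 (1+K) with hβdef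
  have hβ0 : 0 ≤ β := by
    rw [hβdef]
    apply Real.logb_nonneg one_lt_two (by linarith)
  have hqp : 0 < q - p := by linarith
  have hvu : 0 < v - u := lt_of_lt_of_le (by positivity) hau
  -- find minimal m with 2/a ≤ 2^m
  have hex : ∃ m : ℕ, (2:ℝ)/a ≤ 2^m := by
    obtain ⟨n, hn⟩ := pow_unbounded_of_one_lt ((2:ℝ)/a) one_lt_two
    exact ⟨n, hn.le⟩
  set m := Nat.find hex with hm_def
  have hm : (2:ℝ)/a ≤ 2^m := Nat.find_spec hex
  have hm0 : m ≠ 0 := by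
    intro h0
    have := hm
    rw [h0, pow_zero] at this
    have h2a : (2:ℝ) ≤ 2/a := by
      rw [le_div_iff₀ ha0]; linarith
    linarith
  have hm2 : (2:ℝ)^m ≤ 4/a := by
    have hlt := Nat.find_min hex (Nat.sub_lt (Nat.pos_of_ne_zero hm0) one_pos)
    push_neg at hlt
    have h3 : (2:ℝ)^(m-1) < 2/a := hlt
    have e : m = (m-1) + 1 := by omega
    rw [e, pow_succ]
    have h4 : (4:ℝ)/a = 2*(2/a) := by ring
    linarith
  -- s
  set s : ℝ := (q - p)/2^m with hs_def
  have h2m : (0:ℝ) < 2^m := by positivity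
  have hs0 : 0 < s := div_pos hqp h2m
  have hsv : 2*s ≤ v - u := by
    have : s ≤ (q-p) * a / 2 := by
      rw [hs_def, div_le_iff₀ h2m]
      have : (2:ℝ)/a * ((q-p)*a/2) = q - p := by field_simp
      nlinarith [mul_le_mul_of_nonneg_right hm (div_nonneg (mul_nonneg hqp.le ha0.le) (by norm_num) : (0:ℝ) ≤ (q-p)*a/2)]
    nlinarith
  -- k
  set k := ⌈(u - p)/s⌉₊ with hk_def
  have hup0 : 0 ≤ (u-p)/s := div_nonneg (by linarith) hs0.le
  have hku : u ≤ p + (k:ℝ)*s := by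
    have := (div_le_iff₀ hs0).mp (Nat.le_ceil ((u-p)/s))
    linarith
  have hkv : p + ((k:ℝ)+1)*s ≤ v := by
    have hcl : (k:ℝ) < (u-p)/s + 1 := Nat.ceil_lt_add_one hup0
    have : (k:ℝ)*s < (u-p) + s := by
      have := mul_lt_mul_of_pos_right hcl hs0
      rw [add_mul, div_mul_cancel₀ _ hs0.ne'] at this
      linarith
    nlinarith
  have hqps : q = p + (2:ℝ)^m * s := by
    rw [hs_def]; field_simp; ring
  have hk2m : k < 2^m := by
    have h1 : ((k:ℝ)+1)*s ≤ (2:ℝ)^m * s := by nlinarith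
    have h2 : (k:ℝ)+1 ≤ (2:ℝ)^m := le_of_mul_le_mul_right h1 hs0
    have : (k:ℝ) < (2:ℝ)^m := by linarith
    exact_mod_cast this
  have hdy := qs_dyadic hK hmono hqs hpq m k hk2m
  rw [← hs_def] at hdy
  -- monotonicity
  have hfvu : f (p + ((k:ℝ)+1)*s) - f (p + (k:ℝ)*s) ≤ f v - f u := by
    have h1 : f (p + ((k:ℝ)+1)*s) ≤ f v := hmono.monotone hkv
    have h2 : f u ≤ f (p + (k:ℝ)*s) := hmono.monotone hku
    linarith
  have hfqp : (0:ℝ) ≤ f q - f p := by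
    have := hmono.monotone hpq.le
    linarith
  -- (1+K)^m ≤ (4/a)^β
  have h2β : (2:ℝ)^β = 1+K := Real.rpow_logb two_pos (by norm_num) h1K
  have hKm : ((1+K):ℝ)^m ≤ (4/a)^β := by
    calc ((1+K):ℝ)^m = ((2:ℝ)^β)^m := by rw [h2β]
      _ = (2:ℝ)^(β * m) := by
          rw [← Real.rpow_natCast ((2:ℝ)^β) m, ← Real.rpow_mul (by norm_num)]
      _ = ((2:ℝ)^(m:ℝ))^β := by
          rw [← Real.rpow_mul (by norm_num)]; ring_nf
      _ ≤ (4/a)^β := by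
          apply Real.rpow_le_rpow (by positivity) _ hβ0
          rw [Real.rpow_natCast]; exact hm2
  have hprod : (a/4)^β * ((1+K):ℝ)^m ≤ 1 := by
    have h4a : (0:ℝ) ≤ 4/a := by positivity
    calc (a/4)^β * ((1+K):ℝ)^m ≤ (a/4)^β * (4/a)^β := by
          apply mul_le_mul_of_nonneg_left hKm (Real.rpow_nonneg (by positivity) β)
      _ = ((a/4) * (4/a))^β := (Real.mul_rpow (by positivity) h4a).symm
      _ = 1 := by
          rw [show (a/4) * (4/a) = 1 by field_simp]
          exact Real.one_rpow β
  have hKm0 : (0:ℝ) < (1+K)^m := by positivity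
  calc (a/4)^β * (f q - f p)
      ≤ (f q - f p) / (1+K)^m := by
        rw [le_div_iff₀ hKm0]
        calc (a/4)^β * (f q - f p) * (1+K)^m = ((a/4)^β * (1+K)^m) * (f q - f p) := by ring
          _ ≤ 1 * (f q - f p) := mul_le_mul_of_nonneg_right hprod hfqp
          _ = f q - f p := one_mul _
    _ ≤ f (p + ((k:ℝ)+1)*s) - f (p + (k:ℝ)*s) := hdy
    _ ≤ f v - f u := hfvu

section
open Filter

lemma phi_eventually (c α : ℝ) (hc : 0 < c) (hα : 0 < α) (N : ℕ) {β : ℝ} (hβ : 1 ≤ β) :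
    ∀ᶠ n : ℕ in atTop,
      1 / ((n:ℝ)+1) ≤ (c / (α * Real.log ((N:ℝ) + ((n:ℝ)+2))) / 4) ^ β := by
  have hβ0 : 0 < β := lt_of_lt_of_le one_pos hβ
  set δ : ℝ := c/(8*α) with hδdef
  have hδ0 : 0 < δ := by positivity
  have ho := isLittleO_log_rpow_atTop (show (0:ℝ) < 1/β by positivity)
  have hev : ∀ᶠ x : ℝ in atTop, ‖Real.log x‖ ≤ δ * ‖x ^ (1/β)‖ := ho.def hδ0
  have hev2 : ∀ᶠ x : ℝ in atTop, 2 ≤ x ∧ ‖Real.log x‖ ≤ δ * ‖x ^ (1/β)‖ :=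
    (eventually_ge_atTop 2).and hev
  have htend : Tendsto (fun n : ℕ => (N:ℝ) + ((n:ℝ)+2)) atTop atTop := by
    apply tendsto_atTop_add_const_left
    apply tendsto_atTop_add_const_right
    exact tendsto_natCast_atTop_atTop
  filter_upwards [htend.eventually hev2, eventually_ge_atTop N] with n hx hnN
  set x : ℝ := (N:ℝ) + ((n:ℝ)+2) with hxdef
  obtain ⟨hx2, hxlog⟩ := hx
  have hx0 : 0 < x := by linarith
  have hL0 : 0 < Real.log x := Real.log_pos (by linarith)
  set L : ℝ := Real.log x with hLdef
  have hLle : L ≤ δ * x ^ (1/β) := by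
    rwa [Real.norm_eq_abs, Real.norm_eq_abs, abs_of_nonneg hL0.le,
      abs_of_nonneg (Real.rpow_nonneg hx0.le _)] at hxlog
  have hLβ : L ^ β ≤ δ ^ β * x := by
    calc L ^ β ≤ (δ * x ^ (1/β)) ^ β :=
          Real.rpow_le_rpow hL0.le hLle hβ0.le
      _ = δ ^ β * (x ^ (1/β)) ^ β :=
          Real.mul_rpow hδ0.le (Real.rpow_nonneg hx0.le _)
      _ = δ ^ β * x := by
          rw [← Real.rpow_mul hx0.le, one_div_mul_cancel hβ0.ne', Real.rpow_one]
  -- now conclude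
  have hα' : α ≠ 0 := hα.ne'
  have hrw : c / (α * L) / 4 = (c/(4*α)) / L := by
    rw [div_div, div_div]; ring_nf
  have hA : (c / (α * L) / 4) ^ β = (c/(4*α))^β / L^β := by
    rw [hrw, Real.div_rpow (by positivity) hL0.le]
  rw [hA]
  have hLβ0 : 0 < L ^ β := Real.rpow_pos_of_pos hL0 β
  rw [div_le_div_iff₀ (by positivity) hLβ0, one_mul]
  -- goal : L^β ≤ (c/(4α))^β * (n+1)
  have h2δ : c/(4*α) = 2*δ := by rw [hδdef]; field_simp; ring
  have hAδ : (c/(4*α))^β = 2^β * δ^β := by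
    rw [h2δ, Real.mul_rpow (by norm_num) hδ0.le]
  have h2β : (2:ℝ) ≤ 2^β := by
    calc (2:ℝ) = 2^(1:ℝ) := (Real.rpow_one 2).symm
      _ ≤ 2^β := Real.rpow_le_rpow_of_exponent_le one_le_two hβ
  have hδβ0 : 0 < δ^β := Real.rpow_pos_of_pos hδ0 β
  have hxval : x = (N:ℝ) + (n:ℝ) + 2 := by rw [hxdef]; ring
  have hnN' : (N:ℝ) ≤ (n:ℝ) := Nat.cast_le.mpr hnN
  calc L ^ β ≤ δ^β * x := hLβ
    _ ≤ 2^β * δ^β * ((n:ℝ)+1) := by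
        rw [hxval]
        nlinarith [mul_le_mul_of_nonneg_right h2β (mul_nonneg hδβ0.le (by positivity : (0:ℝ) ≤ (n:ℝ)+1))]
    _ = (c/(4*α))^β * ((n:ℝ)+1) := by rw [hAδ]


end

lemma Ioo_disjoint_of_le' {b c : ℝ} (hbc : b ≤ c) (a d : ℝ) :
    Disjoint (Ioo a b) (Ioo c d) :=
  Set.disjoint_left.mpr fun z hz hz' => absurd (hz.2.trans_le hbc) (asymm hz'.1)


/-- For `c, α > 0`, `N ≥ 1` and the sequence `a_j = c / (α log (N + j))`, `j ≥ 2`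
(here reindexed by `j ↦ j + 2`), assumed to lie in `(0,1)`, the image of every
`{a_j}`-porous set `X ⊆ ℝ` under any `K`-quasi-symmetric increasing homeomorphism
of `ℝ` has Lebesgue measure zero. -/
theorem qs_image_of_log_porous_null (c α : ℝ) (hc : 0 < c) (hα : 0 < α)
    (N : ℕ) (hN : 1 ≤ N)
    (ha : ∀ j : ℕ, 0 < c / (α * Real.log ((N : ℝ) + ((j : ℝ) + 2))) ∧
      c / (α * Real.log ((N : ℝ) + ((j : ℝ) + 2))) < 1)
    (X : Set ℝ)
    (hX : IsPorous (fun j => c / (α * Real.log ((N : ℝ) + ((j : ℝ) + 2)))) X)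
    (K : ℝ) (hK : 1 ≤ K) (f : ℝ → ℝ)
    (hmono : StrictMono f) (hcont : Continuous f) (hsurj : Function.Surjective f)
    (hqs : IsQuasiSymmetry K f) :
    volume (f '' X) = 0 := by
  classical
  have h1K : (0:ℝ) < 1 + K := by linarith
  set a : ℕ → ℝ := fun j => c / (α * Real.log ((N : ℝ) + ((j : ℝ) + 2))) with ha_def
  obtain ⟨C, h, hle, hcov, hdisj, hhole, hnest, hsmall⟩ := hX
  have ha' : ∀ n, 0 < a n ∧ a n < 1 := ha
  set β : ℝ := Real.logb 2 (1+K) with hβdef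
  have hβ1 : 1 ≤ β := by
    rw [hβdef]
    calc (1:ℝ) = Real.logb 2 2 := (Real.logb_self_eq_one one_lt_two).symm
      _ ≤ Real.logb 2 (1+K) := Real.logb_le_logb_of_le one_lt_two two_pos (by linarith)
  set φ : ℕ → ℝ := fun n => (a n / 4) ^ β with hφdef
  have hφpos : ∀ n, 0 < φ n := fun n =>
    Real.rpow_pos_of_pos (by have := (ha' n).1; linarith) β
  have hφle1 : ∀ n, φ n ≤ 1 := fun n =>
    Real.rpow_le_one (by have := (ha' n).1; linarith)
      (by have := (ha' n).2; linarith) (by linarith)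
  -- key hole estimate
  have hkey : ∀ n, ∀ p ∈ C n, p.1 < p.2 →
      p.1 ≤ (h n p).1 ∧ (h n p).1 < (h n p).2 ∧ (h n p).2 ≤ p.2 ∧
      φ n * (f p.2 - f p.1) ≤ f (h n p).2 - f (h n p).1 := by
    intro n p hp hp12
    obtain ⟨hsub, hdisX, hlen⟩ := hhole n p hp
    have han := ha' n
    have hh12 : (h n p).1 < (h n p).2 := by nlinarith [han.1]
    have hmem1 : (h n p).1 ∈ Icc p.1 p.2 := hsub ⟨le_refl _, hh12.le⟩
    have hmem2 : (h n p).2 ∈ Icc p.1 p.2 := hsub ⟨hh12.le, le_refl _⟩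
    exact ⟨hmem1.1, hh12, hmem2.2,
      qs_hole hK hmono hqs han.1 han.2.le hmem1.1 hmem2.2 hp12 hlen⟩
  suffices hM : ∀ M : ℕ, volume (f '' (X ∩ Icc (-(M:ℝ)) (M:ℝ))) = 0 by
    have hsub : f '' X ⊆ ⋃ M : ℕ, f '' (X ∩ Icc (-(M:ℝ)) (M:ℝ)) := by
      rintro z ⟨x, hx, rfl⟩
      obtain ⟨M, hMx⟩ := exists_nat_ge |x|
      have h2 := abs_le.mp hMx
      exact mem_iUnion.mpr ⟨M, mem_image_of_mem f ⟨hx, h2.1, h2.2⟩⟩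
    exact measure_mono_null hsub (measure_iUnion_null hM)
  intro M
  set D : ℕ → Set (ℝ × ℝ) := fun n =>
    {p ∈ C n | p.1 < p.2 ∧ (Icc p.1 p.2 ∩ Icc (-(M:ℝ)) (M:ℝ)).Nonempty} with hD_def
  have hDsub : ∀ n, D n ⊆ C n := fun n p hp => hp.1
  have hDmem : ∀ n, ∀ p : ℝ × ℝ, p ∈ D n ↔
      p ∈ C n ∧ p.1 < p.2 ∧ (Icc p.1 p.2 ∩ Icc (-(M:ℝ)) (M:ℝ)).Nonempty := by
    intro n p; rw [hD_def]; exact mem_sep_iff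
  have hDdisj : ∀ n, (D n).PairwiseDisjoint (fun p : ℝ × ℝ => Ioo p.1 p.2) := by
    intro n p hp q hq hpq
    exact hdisj n (hDsub n hp) (hDsub n hq) hpq
  have hDcnt : ∀ n, (D n).Countable := fun n =>
    (hDdisj n).countable_of_isOpen (fun p _ => isOpen_Ioo)
      (fun p hp => nonempty_Ioo.mpr ((hDmem n p).mp hp).2.1)
  have himgdisj : ∀ n, (D n).PairwiseDisjoint
      (fun p : ℝ × ℝ => Ioo (f p.1) (f p.2)) := by
    intro n p hp q hq hpq
    have hd := hdisj n (hDsub n hp) (hDsub n hq) hpq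
    have hp12 := ((hDmem n p).mp hp).2.1
    have hq12 := ((hDmem n q).mp hq).2.1
    have hord : p.2 ≤ q.1 ∨ q.2 ≤ p.1 := by
      by_contra hcon
      push_neg at hcon
      obtain ⟨h1, h2⟩ := hcon
      have hlt : max p.1 q.1 < min p.2 q.2 := by
        rw [lt_min_iff, max_lt_iff, max_lt_iff]
        exact ⟨⟨hp12, h1⟩, ⟨h2, hq12⟩⟩
      obtain ⟨z, hz1, hz2⟩ := exists_between hlt
      have hzp : z ∈ Ioo p.1 p.2 :=
        ⟨lt_of_le_of_lt (le_max_left _ _) hz1, lt_of_lt_of_le hz2 (min_le_left _ _)⟩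
      have hzq : z ∈ Ioo q.1 q.2 :=
        ⟨lt_of_le_of_lt (le_max_right _ _) hz1, lt_of_lt_of_le hz2 (min_le_right _ _)⟩
      exact Set.disjoint_left.mp hd hzp hzq
    rcases hord with hord | hord
    · exact Ioo_disjoint_of_le' (hmono.monotone hord) _ _
    · exact (Ioo_disjoint_of_le' (hmono.monotone hord) _ _).symm
  have hcovM : ∀ n, f '' (X ∩ Icc (-(M:ℝ)) (M:ℝ)) ⊆ ⋃ p ∈ D n, Icc (f p.1) (f p.2) := by
    intro n z hz
    obtain ⟨x, ⟨hxX, hxM⟩, rfl⟩ := hz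
    have hx := hcov n hxX
    rw [mem_iUnion₂] at hx
    obtain ⟨p, hp, hxp⟩ := hx
    have hp12 : p.1 < p.2 := by
      rcases lt_or_eq_of_le (hle n p hp) with hlt | heq
      · exact hlt
      · exfalso
        obtain ⟨hsub, hdisX, hlen⟩ := hhole n p hp
        have hz0 : a n * (p.2 - p.1) = 0 := by rw [← heq]; ring
        have h12 : (h n p).1 ≤ (h n p).2 := by linarith
        have hx1 : x = p.1 := le_antisymm (heq ▸ hxp.2) hxp.1
        have hh1 : (h n p).1 ∈ Icc p.1 p.2 := hsub ⟨le_refl _, h12⟩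
        have hh2 : (h n p).2 ∈ Icc p.1 p.2 := hsub ⟨h12, le_refl _⟩
        have e1 : (h n p).1 = p.1 := le_antisymm (heq ▸ hh1.2) hh1.1
        have e2 : (h n p).2 = p.1 := le_antisymm (heq ▸ hh2.2) hh2.1
        have : x ∈ Icc (h n p).1 (h n p).2 := by
          rw [e1, e2, hx1]; exact ⟨le_refl _, le_refl _⟩
        exact Set.disjoint_left.mp hdisX this hxX
    exact mem_biUnion ((hDmem n p).mpr ⟨hp, hp12, ⟨x, hxp, hxM⟩⟩)
      ⟨hmono.monotone hxp.1, hmono.monotone hxp.2⟩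
  have hstep : ∀ n, (⋃ q ∈ D (n+1), Icc (f q.1) (f q.2)) ⊆
      ⋃ p ∈ D n, (Icc (f p.1) (f p.2) \ Icc (f (h n p).1) (f (h n p).2)) := by
    intro n z hz
    rw [mem_iUnion₂] at hz ⊢
    obtain ⟨q, hq, hzq⟩ := hz
    obtain ⟨hqC, hq12, ⟨y, hyq, hyM⟩⟩ := (hDmem (n+1) q).mp hq
    obtain ⟨p, hpC, hsub⟩ := hnest n q hqC
    have hq1p := hsub ⟨le_refl _, hq12.le⟩
    have hq2p := hsub ⟨hq12.le, le_refl _⟩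
    have hp12 : p.1 < p.2 :=
      lt_of_le_of_lt hq1p.1.1 (lt_of_lt_of_le hq12 hq2p.1.2)
    have hpD : p ∈ D n := (hDmem n p).mpr ⟨hpC, hp12, ⟨y, (hsub hyq).1, hyM⟩⟩
    refine ⟨p, hpD, ?_⟩
    obtain ⟨x, hxq, hfx⟩ := intermediate_value_Icc hq12.le hcont.continuousOn hzq
    have hxp := hsub hxq
    subst hfx
    constructor
    · exact ⟨hmono.monotone hxp.1.1, hmono.monotone hxp.1.2⟩
    · intro hzh
      exact hxp.2 ⟨hmono.le_iff_le.mp hzh.1, hmono.le_iff_le.mp hzh.2⟩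
  have hvol : ∀ n, ∀ p ∈ D n,
      volume (Icc (f p.1) (f p.2) \ Icc (f (h n p).1) (f (h n p).2)) ≤
        ENNReal.ofReal (1 - φ n) * volume (Ioo (f p.1) (f p.2)) := by
    intro n p hp
    obtain ⟨hpC, hp12, -⟩ := (hDmem n p).mp hp
    obtain ⟨hph1, hh12, hh2p, hφh⟩ := hkey n p hpC hp12
    have hf1 : f p.1 ≤ f (h n p).1 := hmono.monotone hph1
    have hf2 : f (h n p).2 ≤ f p.2 := hmono.monotone hh2p
    have hfh : f (h n p).1 < f (h n p).2 := hmono hh12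
    have hsub2 : Icc (f p.1) (f p.2) \ Icc (f (h n p).1) (f (h n p).2) ⊆
        Ico (f p.1) (f (h n p).1) ∪ Ioc (f (h n p).2) (f p.2) := by
      rintro z ⟨⟨hz1, hz2⟩, hz3⟩
      rw [mem_Icc, not_and_or, not_le, not_le] at hz3
      rcases hz3 with h' | h'
      · exact Or.inl ⟨hz1, h'⟩
      · exact Or.inr ⟨h', hz2⟩
    calc volume (Icc (f p.1) (f p.2) \ Icc (f (h n p).1) (f (h n p).2))
        ≤ volume (Ico (f p.1) (f (h n p).1) ∪ Ioc (f (h n p).2) (f p.2)) :=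
          measure_mono hsub2
      _ ≤ volume (Ico (f p.1) (f (h n p).1)) + volume (Ioc (f (h n p).2) (f p.2)) :=
          measure_union_le _ _
      _ = ENNReal.ofReal ((f (h n p).1 - f p.1) + (f p.2 - f (h n p).2)) := by
          rw [Real.volume_Ico, Real.volume_Ioc,
            ← ENNReal.ofReal_add (by linarith) (by linarith)]
      _ ≤ ENNReal.ofReal ((1 - φ n) * (f p.2 - f p.1)) := by
          apply ENNReal.ofReal_le_ofReal
          nlinarith [hφh]
      _ = ENNReal.ofReal (1 - φ n) * ENNReal.ofReal (f p.2 - f p.1) :=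
          ENNReal.ofReal_mul (by linarith [hφle1 n])
      _ = ENNReal.ofReal (1 - φ n) * volume (Ioo (f p.1) (f p.2)) := by
          rw [Real.volume_Ioo]
  set A : ℕ → Set ℝ := fun n => ⋃ p ∈ D n, Icc (f p.1) (f p.2) with hA_def
  have hrec : ∀ n, volume (A (n+1)) ≤ ENNReal.ofReal (1 - φ n) * volume (A n) := by
    intro n
    calc volume (A (n+1))
        ≤ volume (⋃ p ∈ D n,
            (Icc (f p.1) (f p.2) \ Icc (f (h n p).1) (f (h n p).2))) :=
          measure_mono (hstep n)
      _ ≤ ∑' p : (D n), volume (Icc (f (p:ℝ×ℝ).1) (f (p:ℝ×ℝ).2) \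
            Icc (f (h n (p:ℝ×ℝ)).1) (f (h n (p:ℝ×ℝ)).2)) :=
          measure_biUnion_le volume (hDcnt n) _
      _ ≤ ∑' p : (D n), ENNReal.ofReal (1 - φ n) *
            volume (Ioo (f (p:ℝ×ℝ).1) (f (p:ℝ×ℝ).2)) :=
          ENNReal.tsum_le_tsum (fun p => hvol n p p.2)
      _ = ENNReal.ofReal (1 - φ n) *
            ∑' p : (D n), volume (Ioo (f (p:ℝ×ℝ).1) (f (p:ℝ×ℝ).2)) :=
          ENNReal.tsum_mul_left
      _ = ENNReal.ofReal (1 - φ n) * volume (⋃ p ∈ D n, Ioo (f p.1) (f p.2)) := by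
          rw [measure_biUnion (hDcnt n) (himgdisj n) (fun p _ => measurableSet_Ioo)]
      _ ≤ ENNReal.ofReal (1 - φ n) * volume (A n) := by
          apply mul_le_mul_right
          apply measure_mono
          exact iUnion₂_mono fun p hp => Ioo_subset_Icc_self
  obtain ⟨N₁, hN₁⟩ := hsmall 1 one_pos
  obtain ⟨N₂, hN₂⟩ := Filter.eventually_atTop.mp
    (phi_eventually c α hc hα N hβ1 : ∀ᶠ n : ℕ in Filter.atTop, 1/((n:ℝ)+1) ≤ φ n)
  set n₀ : ℕ := max N₁ N₂ with hn₀
  set B : ℝ := f ((M:ℝ)+1) - f (-(M:ℝ)-1) with hBdef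
  have hMM : -(M:ℝ)-1 ≤ (M:ℝ)+1 := by
    have : (0:ℝ) ≤ (M:ℝ) := Nat.cast_nonneg M
    linarith
  have hB0 : 0 ≤ B := by
    have := hmono.monotone hMM
    rw [hBdef]; linarith
  have hBnd : ∀ n, N₁ ≤ n → volume (A n) ≤ ENNReal.ofReal B := by
    intro n hn
    have hsubA : A n ⊆ Icc (f (-(M:ℝ)-1)) (f ((M:ℝ)+1)) := by
      intro z hz
      rw [hA_def, mem_iUnion₂] at hz
      obtain ⟨p, hp, hzp⟩ := hz
      obtain ⟨hpC, hp12, ⟨y, hy1, hy2⟩⟩ := (hDmem n p).mp hp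
      have hlen := hN₁ n hn p hpC
      rw [mem_Icc] at hy2
      have hb1 : -(M:ℝ)-1 ≤ p.1 := by
        have := hy1.2; have := hy1.1; have := hy2.1; linarith
      have hb2 : p.2 ≤ (M:ℝ)+1 := by
        have := hy1.1; have := hy2.2; linarith
      exact ⟨(hmono.monotone hb1).trans hzp.1, hzp.2.trans (hmono.monotone hb2)⟩
    calc volume (A n) ≤ volume (Icc (f (-(M:ℝ)-1)) (f ((M:ℝ)+1))) :=
          measure_mono hsubA
      _ = ENNReal.ofReal B := by rw [Real.volume_Icc, hBdef]
  set P : ℕ → ℝ := fun k => ∏ j ∈ Finset.range k, (1 - φ (n₀ + j)) with hP_def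
  have hP0 : ∀ k, 0 ≤ P k := fun k =>
    Finset.prod_nonneg fun j _ => by linarith [hφle1 (n₀+j)]
  have hind : ∀ k, volume (A (n₀ + k)) ≤ ENNReal.ofReal (P k) * ENNReal.ofReal B := by
    intro k
    induction k with
    | zero =>
      have : P 0 = 1 := by rw [hP_def]; simp
      rw [Nat.add_zero, this, ENNReal.ofReal_one, one_mul]
      exact hBnd n₀ (le_max_left _ _)
    | succ k ih =>
      have he : n₀ + (k+1) = (n₀ + k) + 1 := by omega
      calc volume (A (n₀ + (k+1))) = volume (A ((n₀+k)+1)) := by rw [he]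
        _ ≤ ENNReal.ofReal (1 - φ (n₀+k)) * volume (A (n₀+k)) := hrec _
        _ ≤ ENNReal.ofReal (1 - φ (n₀+k)) * (ENNReal.ofReal (P k) * ENNReal.ofReal B) :=
            mul_le_mul_right ih _
        _ = ENNReal.ofReal (P (k+1)) * ENNReal.ofReal B := by
            rw [← mul_assoc, ← ENNReal.ofReal_mul (by linarith [hφle1 (n₀+k)])]
            congr 2
            rw [hP_def]
            simp only []
            rw [Finset.prod_range_succ]
            ring
  have hcover : ∀ k, volume (f '' (X ∩ Icc (-(M:ℝ)) (M:ℝ))) ≤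
      ENNReal.ofReal (P k * B) := by
    intro k
    calc volume (f '' (X ∩ Icc (-(M:ℝ)) (M:ℝ)))
        ≤ volume (A (n₀+k)) := measure_mono (hcovM (n₀+k))
      _ ≤ ENNReal.ofReal (P k) * ENNReal.ofReal B := hind k
      _ = ENNReal.ofReal (P k * B) := (ENNReal.ofReal_mul (hP0 k)).symm
  -- divergence of the sum
  have hsum : Filter.Tendsto (fun k => ∑ j ∈ Finset.range k, φ (n₀ + j))
      Filter.atTop Filter.atTop := by
    have hlb : ∀ k, (∑ i ∈ Finset.range (n₀+k), (1:ℝ)/(i+1)) -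
        (∑ i ∈ Finset.range n₀, (1:ℝ)/(i+1)) ≤ ∑ j ∈ Finset.range k, φ (n₀+j) := by
      intro k
      have e1 : ∑ i ∈ Finset.Ico n₀ (n₀+k), (1:ℝ)/(i+1) =
          ∑ j ∈ Finset.range k, (1:ℝ)/((n₀+j : ℕ)+1) := by
        rw [Finset.sum_Ico_eq_sum_range]
        simp
      have e2 : ∑ i ∈ Finset.Ico n₀ (n₀+k), (1:ℝ)/(i+1) =
          (∑ i ∈ Finset.range (n₀+k), (1:ℝ)/(i+1)) -
          (∑ i ∈ Finset.range n₀, (1:ℝ)/(i+1)) :=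
        Finset.sum_Ico_eq_sub _ (Nat.le_add_right _ _)
      rw [← e2, e1]
      apply Finset.sum_le_sum
      intro j _
      have : N₂ ≤ n₀ + j := le_trans (le_max_right N₁ N₂) (Nat.le_add_right _ _)
      have hb := hN₂ (n₀+j) this
      have ecast : ((n₀+j : ℕ):ℝ) + 1 = ((n₀+j : ℕ)+1 : ℝ) := by push_cast; ring
      calc (1:ℝ)/((n₀+j : ℕ)+1) = 1/(((n₀+j : ℕ):ℝ)+1) := by push_cast; ring_nf
        _ ≤ φ (n₀+j) := hb
    apply Filter.tendsto_atTop_mono hlb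
    apply Filter.tendsto_atTop_add_const_right
    have hH := Real.tendsto_sum_range_one_div_nat_succ_atTop
    have hcomp : Filter.Tendsto (fun k : ℕ => n₀ + k) Filter.atTop Filter.atTop := by
      have := Filter.tendsto_add_atTop_nat n₀
      refine this.congr (fun k => by omega)
    exact hH.comp hcomp
  have hPle : ∀ k, P k ≤ Real.exp (-(∑ j ∈ Finset.range k, φ (n₀+j))) := by
    intro k
    calc P k ≤ ∏ j ∈ Finset.range k, Real.exp (-(φ (n₀+j))) := by
          apply Finset.prod_le_prod
          · intro j _; linarith [hφle1 (n₀+j)]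
          · intro j _
            have := Real.add_one_le_exp (-(φ (n₀+j)))
            linarith
      _ = Real.exp (∑ j ∈ Finset.range k, -(φ (n₀+j))) := (Real.exp_sum _ _).symm
      _ = Real.exp (-(∑ j ∈ Finset.range k, φ (n₀+j))) := by rw [← Finset.sum_neg_distrib]
  have hPtend : Filter.Tendsto P Filter.atTop (nhds 0) := by
    apply squeeze_zero hP0 hPle
    have hneg : Filter.Tendsto (fun k => -(∑ j ∈ Finset.range k, φ (n₀+j)))
        Filter.atTop Filter.atBot := Filter.tendsto_neg_atBot_iff.mpr hsum
    exact Real.tendsto_exp_atBot.comp hneg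
  have hPBtend : Filter.Tendsto (fun k => ENNReal.ofReal (P k * B))
      Filter.atTop (nhds 0) := by
    have h0 : Filter.Tendsto (fun k => P k * B) Filter.atTop (nhds 0) := by
      have := hPtend.mul_const B
      simpa using this
    have := (ENNReal.continuous_ofReal.tendsto 0).comp h0
    rw [ENNReal.ofReal_zero] at this
    exact this
  exact le_antisymm (ge_of_tendsto' hPBtend hcover) zero_le
end

section
/- Let K ≥ 1 and let f : ℝ → ℝ be a K-quasi-symmetric increasing homeomorphism. Then the Borel measure μ on ℝ defined by μ(E) = leb(f(E)) (the Lebesgue measure of the image of E under f) is a doubling measure: there exists M > 0, depending only on K, such that 0 < μ(B(p,2R)) ≤ M·μ(B(p,R)) for every p ∈ ℝ and every R > 0. -/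
open MeasureTheory Set

lemma image_Icc_eq (f : ℝ → ℝ) (hm : StrictMono f) (hc : Continuous f)
    (a b : ℝ) (hab : a ≤ b) : f '' Icc a b = Icc (f a) (f b) := by
  apply Subset.antisymm
  · rintro _ ⟨x, hx, rfl⟩
    exact ⟨hm.monotone hx.1, hm.monotone hx.2⟩
  · exact intermediate_value_Icc hab hc.continuousOn

/-- For `K ≥ 1` there is `M > 0`, depending only on `K`, such that for every
`K`-quasi-symmetric increasing homeomorphism `f : ℝ → ℝ` the Borel measure
`E ↦ leb (f '' E)` is doubling with constant `M`:
`0 < leb (f '' B(p,2R)) ≤ M · leb (f '' B(p,R))` for all `p` and `R > 0`. -/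
theorem qs_pushforward_doubling (K : ℝ) (hK : 1 ≤ K) :
    ∃ M : NNReal, 0 < M ∧
      ∀ f : ℝ → ℝ, StrictMono f → Continuous f → Function.Surjective f →
        IsQuasiSymmetry K f →
        ∀ p R : ℝ, 0 < R →
          0 < volume (f '' Icc (p - 2 * R) (p + 2 * R)) ∧
          volume (f '' Icc (p - 2 * R) (p + 2 * R)) ≤
            (M : ENNReal) * volume (f '' Icc (p - R) (p + R)) := by
  refine ⟨(K + 1).toNNReal, ?_, ?_⟩
  · simp [Real.toNNReal_pos]; linarith
  intro f hm hc hs hqs p R hR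
  rw [image_Icc_eq f hm hc _ _ (by linarith), image_Icc_eq f hm hc _ _ (by linarith), Real.volume_Icc, Real.volume_Icc]
  have hK0 : 0 < K := by linarith
  -- quasi-symmetry at p+R, t = R
  have h1 := hqs (p + R) R hR
  have h2 := hqs (p - R) R hR
  have e1 : p + R + R = p + 2 * R := by ring
  have e2 : p + R - R = p := by ring
  have e3 : p - R + R = p := by ring
  have e4 : p - R - R = p - 2 * R := by ring
  rw [e1, e2] at h1
  rw [e3, e4] at h2
  have d1 : 0 < f (p + R) - f p := sub_pos.mpr (hm (by linarith))
  have d2 : 0 < f (p - R) - f (p - 2 * R) := sub_pos.mpr (hm (by linarith))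
  have d3 : 0 < f p - f (p - R) := sub_pos.mpr (hm (by linarith))
  -- from h1.2: f(p+2R) - f(p+R) ≤ K * (f(p+R) - f p)
  have hA : f (p + 2 * R) - f (p + R) ≤ K * (f (p + R) - f p) := by
    have := h1.2
    rw [div_le_iff₀ d1] at this
    linarith
  -- from h2.1: f(p-R) - f(p-2R) ≤ K * (f p - f(p-R))
  have hB : f (p - R) - f (p - 2 * R) ≤ K * (f p - f (p - R)) := by
    have := h2.1
    rw [div_le_div_iff₀ hK0 d2] at this
    nlinarith
  have key : f (p + 2 * R) - f (p - 2 * R) ≤ (K + 1) * (f (p + R) - f (p - R)) := by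
    nlinarith
  constructor
  · simp only [ENNReal.ofReal_pos]
    have := hm (show p - 2 * R < p + 2 * R by linarith)
    linarith
  · have hM : ((((K + 1).toNNReal : NNReal)) : ENNReal) = ENNReal.ofReal (K + 1) := by
      simp [ENNReal.ofReal]
    rw [hM, ← ENNReal.ofReal_mul (by linarith)]
    exact ENNReal.ofReal_le_ofReal key
end

section
/- Let 𝒞 be a collection of nondegenerate closed intervals in ℝ and let δ ∈ (0,1). Suppose that for every nondegenerate closed interval I ⊆ ℝ there exist finitely many intervals of 𝒞, contained in I and with pairwise disjoint interiors, whose total Lebesgue measure exceeds δ·leb(I). Then for every nondegenerate closed interval I ⊆ ℝ there exists a countable subcollection of 𝒞 consisting of intervals contained in I with pairwise disjoint interiors whose union has full Lebesgue measure in I. -/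
open MeasureTheory Set

private lemma Ioo_diff_Icc' (c d p q : ℝ) (hpq : p ≤ q) :
    Ioo c d \ Icc p q = Ioo c (min d p) ∪ Ioo (max c q) d := by
  ext x
  simp only [mem_diff, mem_Ioo, mem_Icc, mem_union, lt_min_iff, max_lt_iff, not_and, not_le]
  constructor
  · rintro ⟨⟨h1, h2⟩, h3⟩
    rcases lt_or_ge x p with hx | hx
    · exact Or.inl ⟨h1, h2, hx⟩
    · exact Or.inr ⟨⟨h1, h3 hx⟩, h2⟩
  · rintro (⟨h1, h2, h3⟩ | ⟨⟨h1, h2⟩, h3⟩)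
    · exact ⟨⟨h1, h2⟩, fun hp => absurd h3 (not_lt.2 hp)⟩
    · exact ⟨⟨h1, h3⟩, fun _ => h2⟩

private lemma openComp (a b : ℝ) (F : Finset (Set ℝ))
    (hF : ∀ E ∈ F, ∃ p q : ℝ, p < q ∧ E = Icc p q) :
    ∃ S : Finset (ℝ × ℝ),
      (Ioo a b \ ⋃₀ ↑F) = ⋃ r ∈ S, Ioo r.1 r.2 ∧
      ((S : Set (ℝ × ℝ)).Pairwise fun r r' => Disjoint (Ioo r.1 r.2) (Ioo r'.1 r'.2)) := by
  classical
  induction F using Finset.induction_on with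
  | empty =>
    exact ⟨{(a, b)}, by simp, by simp⟩
  | @insert E F hEF ih =>
    obtain ⟨S, hS, hSP⟩ := ih (fun E' hE' => hF E' (Finset.mem_insert_of_mem hE'))
    obtain ⟨p, q, hpq, hEeq⟩ := hF E (Finset.mem_insert_self E F)
    refine ⟨S.biUnion (fun r => {(r.1, min r.2 p), (max r.1 q, r.2)}), ?_, ?_⟩
    · have hins : (⋃₀ ↑(insert E F) : Set ℝ) = E ∪ ⋃₀ ↑F := by
        simp [Finset.coe_insert, Set.sUnion_insert]
      have hkey : ∀ r : ℝ × ℝ, Ioo r.1 r.2 \ Icc p q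
          = Ioo r.1 (min r.2 p) ∪ Ioo (max r.1 q) r.2 :=
        fun r => Ioo_diff_Icc' _ _ _ _ hpq.le
      rw [hins, hEeq, union_comm, ← diff_diff, hS]
      ext x
      simp only [iUnion_diff, hkey, mem_iUnion, Finset.mem_biUnion, mem_union,
        Finset.mem_insert, Finset.mem_singleton, exists_prop]
      constructor
      · rintro ⟨r, hr, h | h⟩
        · exact ⟨(r.1, min r.2 p), ⟨r, hr, Or.inl rfl⟩, h⟩
        · exact ⟨(max r.1 q, r.2), ⟨r, hr, Or.inr rfl⟩, h⟩
      · rintro ⟨r', ⟨r, hr, hcase | hcase⟩, hx⟩ <;> subst hcase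
        · exact ⟨r, hr, Or.inl hx⟩
        · exact ⟨r, hr, Or.inr hx⟩
    · intro r₁ hr₁ r₂ hr₂ hne
      simp only [Finset.coe_biUnion, mem_iUnion, Finset.mem_coe, Finset.mem_insert,
        Finset.mem_singleton, exists_prop] at hr₁ hr₂
      obtain ⟨s₁, hs₁, hc₁⟩ := hr₁
      obtain ⟨s₂, hs₂, hc₂⟩ := hr₂
      have hsub : ∀ (s : ℝ × ℝ) (r : ℝ × ℝ),
          (r = (s.1, min s.2 p) ∨ r = (max s.1 q, s.2)) → Ioo r.1 r.2 ⊆ Ioo s.1 s.2 := by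
        rintro s r (rfl | rfl)
        · exact Ioo_subset_Ioo_right (min_le_left _ _)
        · exact Ioo_subset_Ioo_left (le_max_left _ _)
      by_cases hss : s₁ = s₂
      · subst hss
        have hd : Disjoint (Ioo s₁.1 (min s₁.2 p)) (Ioo (max s₁.1 q) s₁.2) := by
          rw [Set.disjoint_left]
          rintro x ⟨_, hx2⟩ ⟨hx3, _⟩
          have h1 : x < p := lt_of_lt_of_le hx2 (min_le_right _ _)
          have h2 : q < x := lt_of_le_of_lt (le_max_right _ _) hx3
          linarith
        rcases hc₁ with rfl | rfl <;> rcases hc₂ with rfl | rfl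
        · exact absurd rfl hne
        · exact hd
        · exact hd.symm
        · exact absurd rfl hne
      · exact (hSP hs₁ hs₂ hss).mono (hsub s₁ r₁ hc₁) (hsub s₂ r₂ hc₂)

private lemma volIccIoo (a b : ℝ) (X : Set ℝ) :
    volume (Icc a b \ X) = volume (Ioo a b \ X) := by
  apply le_antisymm
  · have hsub : Icc a b \ X ⊆ (Ioo a b \ X) ∪ {a, b} := by
      rintro x ⟨hx, hxX⟩
      rcases eq_or_lt_of_le hx.1 with h | h
      · exact Or.inr (Or.inl h.symm)
      rcases eq_or_lt_of_le hx.2 with h' | h'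
      · exact Or.inr (Or.inr h')
      · exact Or.inl ⟨⟨h, h'⟩, hxX⟩
    refine (measure_mono hsub).trans ?_
    refine (measure_union_le _ _).trans ?_
    have : volume ({a, b} : Set ℝ) = 0 := (Set.toFinite _).measure_zero volume
    simp [this]
  · exact measure_mono (diff_subset_diff_left Ioo_subset_Icc_self)


private lemma step_lemma (𝒞 : Set (Set ℝ))
    (h𝒞 : ∀ E ∈ 𝒞, ∃ a b : ℝ, a < b ∧ E = Icc a b)
    (δ : ℝ) (hδ : δ ∈ Set.Ioo (0 : ℝ) 1)
    (hcov : ∀ a b : ℝ, a < b → ∃ F : Finset (Set ℝ), ↑F ⊆ 𝒞 ∧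
      (∀ E ∈ F, E ⊆ Icc a b) ∧
      ((F : Set (Set ℝ)).Pairwise fun E E' => Disjoint (interior E) (interior E')) ∧
      ENNReal.ofReal (δ * (b - a)) < ∑ E ∈ F, volume E)
    (a b : ℝ)
    (F : Finset (Set ℝ)) (hFC : ↑F ⊆ 𝒞) (hFI : ∀ E ∈ F, E ⊆ Icc a b)
    (hFP : (F : Set (Set ℝ)).Pairwise fun E E' => Disjoint (interior E) (interior E')) :
    ∃ F' : Finset (Set ℝ), F ⊆ F' ∧ ↑F' ⊆ 𝒞 ∧ (∀ E ∈ F', E ⊆ Icc a b) ∧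
      ((F' : Set (Set ℝ)).Pairwise fun E E' => Disjoint (interior E) (interior E')) ∧
      volume (Icc a b \ ⋃₀ ↑F') ≤ ENNReal.ofReal (1 - δ) * volume (Icc a b \ ⋃₀ ↑F) := by
  classical
  choose G hGC hGI hGP hGv using hcov
  obtain ⟨S, hS, hSP⟩ := openComp a b F (fun E hE => h𝒞 E (hFC hE))
  set g : ℝ × ℝ → Finset (Set ℝ) :=
    fun r => if h : r.1 < r.2 then G r.1 r.2 h else ∅ with hg_def
  have hIoo : ∀ r ∈ S, Ioo r.1 r.2 ⊆ Ioo a b \ ⋃₀ ↑F := by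
    intro r hr
    rw [hS]
    intro x hx
    exact mem_iUnion₂.2 ⟨r, hr, hx⟩
  -- basic facts about g r for r ∈ S
  have hg : ∀ r ∈ S, ∀ E ∈ g r, E ∈ 𝒞 ∧ E ⊆ Icc a b ∧ interior E ⊆ Ioo r.1 r.2 := by
    intro r hr E hE
    by_cases h : r.1 < r.2
    · simp only [hg_def, dif_pos h] at hE
      have hEsub : E ⊆ Icc r.1 r.2 := hGI r.1 r.2 h E hE
      have hrab : a ≤ r.1 ∧ r.2 ≤ b :=
        (Ioo_subset_Ioo_iff h).1 ((hIoo r hr).trans diff_subset)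
      refine ⟨hGC r.1 r.2 h hE, hEsub.trans (Icc_subset_Icc hrab.1 hrab.2), ?_⟩
      calc interior E ⊆ interior (Icc r.1 r.2) := interior_mono hEsub
        _ = Ioo r.1 r.2 := interior_Icc
    · simp [hg_def, dif_neg h] at hE
  set F' : Finset (Set ℝ) := F ∪ S.biUnion g with hF'_def
  have hmem : ∀ E, E ∈ F' ↔ E ∈ F ∨ ∃ r ∈ S, E ∈ g r := by
    intro E; simp [hF'_def, Finset.mem_union, Finset.mem_biUnion]
  refine ⟨F', Finset.subset_union_left, ?_, ?_, ?_, ?_⟩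
  · intro E hE
    rcases (hmem E).1 hE with h | ⟨r, hr, h⟩
    · exact hFC h
    · exact (hg r hr E h).1
  · intro E hE
    rcases (hmem E).1 hE with h | ⟨r, hr, h⟩
    · exact hFI E h
    · exact (hg r hr E h).2.1
  · -- pairwise disjoint interiors
    intro E hE E' hE' hne
    rcases (hmem E).1 hE with h | ⟨r, hr, h⟩ <;> rcases (hmem E').1 hE' with h' | ⟨r', hr', h'⟩
    · exact hFP h h' hne
    · -- E ∈ F, E' ∈ g r'
      rw [Set.disjoint_right]
      intro x hx hx'
      have := ((hg r' hr' E' h').2.2 hx)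
      have hnot : x ∉ ⋃₀ (↑F : Set (Set ℝ)) := ((hIoo r' hr') this).2
      exact hnot ⟨E, h, interior_subset hx'⟩
    · rw [Set.disjoint_left]
      intro x hx hx'
      have := ((hg r hr E h).2.2 hx)
      have hnot : x ∉ ⋃₀ (↑F : Set (Set ℝ)) := ((hIoo r hr) this).2
      exact hnot ⟨E', h', interior_subset hx'⟩
    · by_cases hrr : r = r'
      · subst hrr
        by_cases hlt : r.1 < r.2
        · simp only [hg_def, dif_pos hlt] at h h'
          exact hGP r.1 r.2 hlt h h' hne
        · simp [hg_def, dif_neg hlt] at h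
      · exact (hSP hr hr' hrr).mono (hg r hr E h).2.2 (hg r' hr' E' h').2.2
  · -- the measure estimate
    have hsub : Ioo a b \ ⋃₀ ↑F' ⊆ ⋃ r ∈ S, (Ioo r.1 r.2 \ ⋃₀ ↑(g r)) := by
      intro x hx
      have hxF : x ∈ Ioo a b \ ⋃₀ (↑F : Set (Set ℝ)) := by
        refine ⟨hx.1, fun hc => hx.2 ?_⟩
        obtain ⟨T, hT, hxT⟩ := hc
        exact ⟨T, Finset.mem_coe.2 (Finset.mem_union_left _ (Finset.mem_coe.1 hT)), hxT⟩
      rw [hS] at hxF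
      obtain ⟨r, hrS, hxr⟩ := mem_iUnion₂.1 hxF
      refine mem_iUnion₂.2 ⟨r, hrS, hxr, fun hc => hx.2 ?_⟩
      obtain ⟨T, hT, hxT⟩ := hc
      exact ⟨T, Finset.mem_coe.2 (Finset.mem_union_right _
        (Finset.mem_biUnion.2 ⟨r, hrS, Finset.mem_coe.1 hT⟩)), hxT⟩
    have hbound : ∀ r ∈ S, volume (Ioo r.1 r.2 \ ⋃₀ ↑(g r))
        ≤ ENNReal.ofReal (1 - δ) * volume (Ioo r.1 r.2) := by
      intro r hr
      by_cases hlt : r.1 < r.2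
      · -- main case
        set U : Set ℝ := ⋃ E ∈ g r, interior E with hU_def
        have hUsub : U ⊆ Ioo r.1 r.2 := by
          refine iUnion₂_subset fun E hE => (hg r hr E hE).2.2
        have hUmeas : MeasurableSet U :=
          (g r).measurableSet_biUnion (fun E _ => isOpen_interior.measurableSet)
        have hUsub' : U ⊆ ⋃₀ ↑(g r) := by
          refine iUnion₂_subset fun E hE => ?_
          exact (interior_subset).trans (subset_sUnion_of_mem hE)
        have hvolU : volume U = ∑ E ∈ g r, volume (interior E) := by
          refine measure_biUnion_finset ?_ (fun E _ => isOpen_interior.measurableSet)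
          intro E hE E' hE' hne
          simp only [hg_def, dif_pos hlt] at hE hE'
          exact hGP r.1 r.2 hlt hE hE' hne
        have hvol_int : ∀ E ∈ g r, volume (interior E) = volume E := by
          intro E hE
          simp only [hg_def, dif_pos hlt] at hE
          obtain ⟨p, q, hpq, rfl⟩ := h𝒞 E (hGC r.1 r.2 hlt hE)
          rw [interior_Icc, Real.volume_Ioo, Real.volume_Icc]
        have hUge : ENNReal.ofReal (δ * (r.2 - r.1)) ≤ volume U := by
          rw [hvolU, Finset.sum_congr rfl hvol_int]
          have := hGv r.1 r.2 hlt
          simp only [hg_def, dif_pos hlt]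
          exact this.le
        calc volume (Ioo r.1 r.2 \ ⋃₀ ↑(g r))
            ≤ volume (Ioo r.1 r.2 \ U) := measure_mono (diff_subset_diff_right hUsub')
          _ = volume (Ioo r.1 r.2) - volume U := by
              rw [measure_diff hUsub hUmeas.nullMeasurableSet
                ((measure_mono hUsub).trans_lt (by simp [Real.volume_Ioo])).ne]
          _ ≤ volume (Ioo r.1 r.2) - ENNReal.ofReal (δ * (r.2 - r.1)) :=
              tsub_le_tsub_left hUge _
          _ ≤ ENNReal.ofReal (1 - δ) * volume (Ioo r.1 r.2) := by
              rw [Real.volume_Ioo, ← ENNReal.ofReal_sub _ (by nlinarith [hδ.1, hlt] : (0:ℝ) ≤ δ * (r.2 - r.1)), ← ENNReal.ofReal_mul (by linarith [hδ.2] : (0:ℝ) ≤ 1 - δ)]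
              exact ENNReal.ofReal_le_ofReal (by ring_nf; exact le_refl _)
      · have : Ioo r.1 r.2 = ∅ := Ioo_eq_empty hlt
        simp [this]
    calc volume (Icc a b \ ⋃₀ ↑F')
        = volume (Ioo a b \ ⋃₀ ↑F') := volIccIoo a b _
      _ ≤ volume (⋃ r ∈ S, (Ioo r.1 r.2 \ ⋃₀ ↑(g r))) := measure_mono hsub
      _ ≤ ∑ r ∈ S, volume (Ioo r.1 r.2 \ ⋃₀ ↑(g r)) := measure_biUnion_finset_le _ _
      _ ≤ ∑ r ∈ S, ENNReal.ofReal (1 - δ) * volume (Ioo r.1 r.2) :=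
          Finset.sum_le_sum hbound
      _ = ENNReal.ofReal (1 - δ) * ∑ r ∈ S, volume (Ioo r.1 r.2) := by
          rw [Finset.mul_sum]
      _ = ENNReal.ofReal (1 - δ) * volume (⋃ r ∈ S, Ioo r.1 r.2) := by
          rw [measure_biUnion_finset hSP (fun r _ => measurableSet_Ioo)]
      _ = ENNReal.ofReal (1 - δ) * volume (Icc a b \ ⋃₀ ↑F) := by
          rw [← hS, volIccIoo]

/-- If `𝒞` is a collection of nondegenerate closed intervals such that every nondegenerate
closed interval `I` contains finitely many members of `𝒞` with pairwise disjoint interiors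
of total Lebesgue measure exceeding `δ · leb I`, then every nondegenerate closed interval
`I` contains a countable subcollection of `𝒞` with pairwise disjoint interiors whose union
has full Lebesgue measure in `I`. -/
theorem fill_interval_of_definite_proportion (𝒞 : Set (Set ℝ))
    (h𝒞 : ∀ E ∈ 𝒞, ∃ a b : ℝ, a < b ∧ E = Icc a b)
    (δ : ℝ) (hδ : δ ∈ Set.Ioo (0 : ℝ) 1)
    (hcov : ∀ a b : ℝ, a < b → ∃ F : Finset (Set ℝ), ↑F ⊆ 𝒞 ∧
      (∀ E ∈ F, E ⊆ Icc a b) ∧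
      ((F : Set (Set ℝ)).Pairwise fun E E' => Disjoint (interior E) (interior E')) ∧
      ENNReal.ofReal (δ * (b - a)) < ∑ E ∈ F, volume E) :
    ∀ a b : ℝ, a < b → ∃ D : Set (Set ℝ), D ⊆ 𝒞 ∧ D.Countable ∧
      (∀ E ∈ D, E ⊆ Icc a b) ∧
      (D.Pairwise fun E E' => Disjoint (interior E) (interior E')) ∧
      volume (Icc a b \ ⋃₀ D) = 0 := by
  classical
  intro a b hab
  set c : ENNReal := ENNReal.ofReal (1 - δ) with hc_def
  set Q : Finset (Set ℝ) → Prop := fun F => ↑F ⊆ 𝒞 ∧ (∀ E ∈ F, E ⊆ Icc a b) ∧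
      ((F : Set (Set ℝ)).Pairwise fun E E' => Disjoint (interior E) (interior E')) with hQ_def
  have hQ0 : Q ∅ := by
    refine ⟨by simp, by simp, by simp⟩
  have hstep : ∀ p : {F : Finset (Set ℝ) // Q F}, ∃ q : {F : Finset (Set ℝ) // Q F},
      p.1 ⊆ q.1 ∧ volume (Icc a b \ ⋃₀ ↑q.1) ≤ c * volume (Icc a b \ ⋃₀ ↑p.1) := by
    rintro ⟨F, hF1, hF2, hF3⟩
    obtain ⟨F', h1, h2, h3, h4, h5⟩ := step_lemma 𝒞 h𝒞 δ hδ hcov a b F hF1 hF2 hF3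
    exact ⟨⟨F', h2, h3, h4⟩, h1, h5⟩
  choose nxt hnxt1 hnxt2 using hstep
  set seq : ℕ → {F : Finset (Set ℝ) // Q F} :=
    fun n => Nat.rec ⟨∅, hQ0⟩ (fun _ p => nxt p) n with hseq_def
  have hseq_succ : ∀ n, seq (n + 1) = nxt (seq n) := fun n => rfl
  have hmono : ∀ n m, n ≤ m → (seq n).1 ⊆ (seq m).1 := by
    intro n m hnm
    induction m with
    | zero => rw [Nat.le_zero.1 hnm]
    | succ m ih =>
      rcases Nat.lt_or_ge n (m + 1) with h | h
      · exact (ih (Nat.lt_succ_iff.1 h)).trans (by rw [hseq_succ]; exact hnxt1 (seq m))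
      · rw [Nat.le_antisymm hnm h]
  have hvol : ∀ n, volume (Icc a b \ ⋃₀ ↑(seq n).1) ≤ c ^ n * ENNReal.ofReal (b - a) := by
    intro n
    induction n with
    | zero =>
      simp only [hseq_def, pow_zero, one_mul]
      simp [Real.volume_Icc]
    | succ n ih =>
      rw [hseq_succ]
      calc volume (Icc a b \ ⋃₀ ↑(nxt (seq n)).1)
          ≤ c * volume (Icc a b \ ⋃₀ ↑(seq n).1) := hnxt2 (seq n)
        _ ≤ c * (c ^ n * ENNReal.ofReal (b - a)) := mul_le_mul_right ih _
        _ = c ^ (n + 1) * ENNReal.ofReal (b - a) := by ring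
  set D : Set (Set ℝ) := ⋃ n, ((seq n).1 : Set (Set ℝ)) with hD_def
  refine ⟨D, ?_, ?_, ?_, ?_, ?_⟩
  · exact iUnion_subset fun n => (seq n).2.1
  · exact countable_iUnion fun n => (seq n).1.countable_toSet
  · intro E hE
    obtain ⟨n, hn⟩ := mem_iUnion.1 hE
    exact (seq n).2.2.1 E hn
  · intro E hE E' hE' hne
    obtain ⟨n, hn⟩ := mem_iUnion.1 hE
    obtain ⟨m, hm⟩ := mem_iUnion.1 hE'
    exact (seq (max n m)).2.2.2
      (hmono n _ (le_max_left _ _) hn) (hmono m _ (le_max_right _ _) hm) hne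
  · have hle : ∀ n, volume (Icc a b \ ⋃₀ D) ≤ c ^ n * ENNReal.ofReal (b - a) := by
      intro n
      refine (measure_mono (diff_subset_diff_right ?_)).trans (hvol n)
      exact sUnion_subset_sUnion (by exact subset_iUnion (fun n => ((seq n).1 : Set (Set ℝ))) n)
    have hc1 : c < 1 := by
      rw [hc_def]
      exact ENNReal.ofReal_lt_one.2 (by linarith [hδ.1])
    have htend : Filter.Tendsto (fun n => c ^ n * ENNReal.ofReal (b - a)) Filter.atTop (nhds 0) := by
      have h1 := ENNReal.tendsto_pow_atTop_nhds_zero_of_lt_one hc1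
      have := ENNReal.Tendsto.mul_const (b := ENNReal.ofReal (b - a)) h1 (Or.inr ENNReal.ofReal_ne_top)
      simpa using this
    exact le_antisymm (ge_of_tendsto' htend hle) zero_le
end
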